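/- arXiv:2509.04756 — 3 statements merged into one kernel-verified Lean document; each statement's English description precedes it below -/
import Mathlib

section
/- Let 0 < r ≤ ∞ and let f be holomorphic on the punctured disk {z ∈ ℂ : 0 < |z| < r}. Then there exist a function g holomorphic on {|z| < r} and a function h holomorphic on ℂ ∖ {0} with h(z) → 0 as |z| → ∞, such that f = g + h on the punctured disk; moreover this decomposition is unique. -/
set_option maxHeartbeats 1000000

open Filter Set Metric Complex Real Asymptotics


/-- Cauchy formula on an annulus centered at 0. -/
lemma annulus_cauchy_formula {f : ℂ → ℂ} {ρ R : ℝ} {z : ℂ} (hρ : 0 < ρ)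
    (hzρ : ρ < ‖z‖) (hzR : ‖z‖ < R)
    (hf : DifferentiableOn ℂ f (closedBall 0 R \ ball 0 ρ)) :
    (∮ w in C(0, R), (w - z)⁻¹ • f w) - (∮ w in C(0, ρ), (w - z)⁻¹ • f w)
      = (2 * π * Complex.I) • f z := by
  have hρR : ρ ≤ R := by linarith [norm_nonneg z]
  set A : Set ℂ := ball (0:ℂ) R \ closedBall 0 ρ with hA
  have hAopen : IsOpen A := isOpen_ball.sdiff isClosed_closedBall
  have hzA : z ∈ A := by
    constructor
    · simpa [mem_ball_zero_iff] using hzR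
    · simp only [mem_closedBall_zero_iff, not_le]; exact hzρ
  have hAsub : A ⊆ closedBall 0 R \ ball 0 ρ := by
    intro w hw
    exact ⟨ball_subset_closedBall hw.1, fun hw' => hw.2 (ball_subset_closedBall hw')⟩
  have hAnhds : A ∈ nhds z := hAopen.mem_nhds hzA
  have hCAnhds : closedBall (0:ℂ) R \ ball 0 ρ ∈ nhds z :=
    Filter.mem_of_superset hAnhds hAsub
  have hfA : DifferentiableOn ℂ f A := hf.mono hAsub
  have hdA : DifferentiableOn ℂ (dslope f z) A := (differentiableOn_dslope hAnhds).2 hfA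
  have hcont : ContinuousOn (dslope f z) (closedBall 0 R \ ball 0 ρ) :=
    (continuousOn_dslope hCAnhds).2 ⟨hf.continuousOn, hfA.differentiableAt hAnhds⟩
  have key : (∮ w in C(0, R), dslope f z w) = ∮ w in C(0, ρ), dslope f z w := by
    refine Complex.circleIntegral_eq_of_differentiable_on_annulus_off_countable hρ hρR
      countable_empty hcont ?_
    rintro w ⟨hw, -⟩
    exact hdA.differentiableAt (hAopen.mem_nhds hw)
  -- rewrite both circle integrals of dslope
  have sph_ne : ∀ {t : ℝ}, ‖z‖ ≠ t → ∀ w ∈ sphere (0:ℂ) t, w ≠ z := by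
    intro t ht w hw hwz
    rw [mem_sphere_zero_iff_norm] at hw
    exact ht ((hwz ▸ hw) : ‖z‖ = t)
  have fc : ∀ {t : ℝ}, 0 < t → t ≤ R → ρ ≤ t → ContinuousOn f (sphere (0:ℂ) t) := by
    intro t ht htR hρt
    refine hf.continuousOn.mono ?_
    intro w hw
    rw [mem_sphere_zero_iff_norm] at hw
    constructor
    · simpa [mem_closedBall_zero_iff, hw] using htR
    · simp only [mem_ball_zero_iff, not_lt, hw]; exact hρt
  have step : ∀ {t : ℝ}, 0 < t → t ≤ R → ρ ≤ t → ‖z‖ ≠ t →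
      (∮ w in C(0, t), dslope f z w)
        = (∮ w in C(0, t), (w - z)⁻¹ • f w) - (∮ w in C(0, t), (w - z)⁻¹) • f z := by
    intro t ht htR hρt hne
    have hzs := sph_ne hne
    have hinv : ContinuousOn (fun w : ℂ => (w - z)⁻¹) (sphere 0 t) :=
      (continuousOn_id.sub continuousOn_const).inv₀ fun w hw => sub_ne_zero.2 (hzs w hw)
    have ci1 : CircleIntegrable (fun w => (w - z)⁻¹ • f w) 0 t :=
      (hinv.smul (fc ht htR hρt)).circleIntegrable ht.le
    have ci2 : CircleIntegrable (fun w => (w - z)⁻¹ • f z) 0 t :=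
      (hinv.smul continuousOn_const).circleIntegrable ht.le
    rw [← circleIntegral.integral_smul_const, ← circleIntegral.integral_sub ci1 ci2]
    refine circleIntegral.integral_congr ht.le fun w hw => ?_
    rw [dslope_of_ne _ (hzs w hw), slope_def_module]
    simp only [smul_eq_mul]; ring
  have hR0 : 0 < R := hρ.trans_le hρR
  rw [step hR0 le_rfl hρR (ne_of_lt hzR), step hρ hρR le_rfl (ne_of_gt hzρ)] at key
  have hRint : (∮ w in C(0, R), (w - z)⁻¹) = 2 * π * Complex.I :=
    circleIntegral.integral_sub_inv_of_mem_ball (by simpa [mem_ball_zero_iff] using hzR)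
  have hρint : (∮ w in C(0, ρ), (w - z)⁻¹) = 0 := by
    refine Complex.circleIntegral_eq_zero_of_differentiable_on_off_countable hρ.le
      countable_empty ?_ ?_
    · refine (continuousOn_id.sub continuousOn_const).inv₀ fun w hw => sub_ne_zero.2 ?_
      rw [mem_closedBall_zero_iff] at hw
      exact fun hwz => absurd ((show w = z from hwz) ▸ hw) (not_le.2 hzρ)
    · rintro w ⟨hw, -⟩
      rw [mem_ball_zero_iff] at hw
      exact (differentiableAt_id.sub_const z).inv (sub_ne_zero.2 fun hwz =>
        absurd (hwz ▸ hw) (not_lt.2 hzρ.le))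
  rw [hRint, hρint, zero_smul, sub_zero] at key
  linear_combination key



lemma cauchy_integral_diffAt_outside {f : ℂ → ℂ} {ρ : ℝ} (hρ : 0 < ρ)
    (hfc : ContinuousOn f (sphere (0:ℂ) ρ)) {z₀ : ℂ} (hz : ρ < ‖z₀‖) :
    DifferentiableAt ℂ (fun z => ∮ w in C(0, ρ), (w - z)⁻¹ • f w) z₀ := by
  obtain ⟨M, hM⟩ := (isCompact_sphere (0:ℂ) ρ).exists_bound_of_continuousOn hfc
  set M' : ℝ := max M 0 with hM'def
  have hM'0 : 0 ≤ M' := le_max_right _ _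
  have hM' : ∀ w ∈ sphere (0:ℂ) ρ, ‖f w‖ ≤ M' := fun w hw => (hM w hw).trans (le_max_left _ _)
  set d : ℝ := ‖z₀‖ - ρ with hd_def
  have hd : 0 < d := sub_pos.2 hz
  set D : ℂ := ∮ w in C(0, ρ), ((w - z₀) ^ 2)⁻¹ • f w with hD
  set K : ℝ := 4 * π * ρ * (M' + 1) / d ^ 3 with hK
  have hKpos : 0 < K := by
    apply div_pos
    · positivity
    · positivity
  suffices H : HasDerivAt (fun z => ∮ w in C(0, ρ), (w - z)⁻¹ • f w) D z₀ from H.differentiableAt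
  rw [hasDerivAt_iff_isLittleO, isLittleO_iff]
  intro c hc
  have hball : Metric.ball z₀ (min (d / 2) (c / K)) ∈ nhds z₀ :=
    Metric.ball_mem_nhds _ (lt_min (by linarith) (div_pos hc hKpos))
  filter_upwards [hball] with z hzball
  rw [mem_ball, dist_eq_norm] at hzball
  have hz1 : ‖z - z₀‖ < d / 2 := hzball.trans_le (min_le_left _ _)
  have hz2 : ‖z - z₀‖ ≤ c / K := (hzball.trans_le (min_le_right _ _)).le
  -- geometric bounds on the sphere
  have hw1 : ∀ w ∈ sphere (0:ℂ) ρ, d ≤ ‖w - z₀‖ := by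
    intro w hw
    rw [mem_sphere_zero_iff_norm] at hw
    have := norm_sub_norm_le z₀ w
    rw [norm_sub_rev z₀ w] at this
    simp only [hd_def, hw] at *
    linarith
  have hw2 : ∀ w ∈ sphere (0:ℂ) ρ, d / 2 ≤ ‖w - z‖ := by
    intro w hw
    have h1 := hw1 w hw
    have : ‖w - z₀‖ - ‖z - z₀‖ ≤ ‖w - z‖ := by
      have := norm_sub_le (w - z) (z₀ - z)
      have e : w - z₀ = (w - z) - (z₀ - z) := by ring
      rw [norm_sub_rev z₀ z] at *
      calc ‖w - z₀‖ - ‖z - z₀‖ ≤ (‖w - z‖ + ‖z₀ - z‖) - ‖z - z₀‖ := by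
              rw [e] at h1 ⊢
              have := norm_sub_le (w-z) (z₀ - z)
              rw [norm_sub_rev z₀ z]; linarith [norm_sub_le (w-z) (z₀-z)]
        _ = ‖w - z‖ := by rw [norm_sub_rev z₀ z]; ring
    linarith
  have hwz : ∀ w ∈ sphere (0:ℂ) ρ, w ≠ z := by
    intro w hw hwz
    have := hw2 w hw
    rw [hwz, sub_self, norm_zero] at this
    linarith
  have hwz₀ : ∀ w ∈ sphere (0:ℂ) ρ, w ≠ z₀ := by
    intro w hw hwz
    have := hw1 w hw
    rw [hwz, sub_self, norm_zero] at this
    linarith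
  -- circle integrabilities
  have hinv : ContinuousOn (fun w : ℂ => (w - z)⁻¹) (sphere 0 ρ) :=
    (continuousOn_id.sub continuousOn_const).inv₀ fun w hw => sub_ne_zero.2 (hwz w hw)
  have hinv₀ : ContinuousOn (fun w : ℂ => (w - z₀)⁻¹) (sphere 0 ρ) :=
    (continuousOn_id.sub continuousOn_const).inv₀ fun w hw => sub_ne_zero.2 (hwz₀ w hw)
  have hinv₀2 : ContinuousOn (fun w : ℂ => ((w - z₀) ^ 2)⁻¹) (sphere 0 ρ) :=
    ((continuousOn_id.sub continuousOn_const).pow 2).inv₀ fun w hw =>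
      pow_ne_zero _ (sub_ne_zero.2 (hwz₀ w hw))
  have ci1 : CircleIntegrable (fun w => (w - z)⁻¹ • f w) 0 ρ :=
    (hinv.smul hfc).circleIntegrable hρ.le
  have ci2 : CircleIntegrable (fun w => (w - z₀)⁻¹ • f w) 0 ρ :=
    (hinv₀.smul hfc).circleIntegrable hρ.le
  have ci12 : CircleIntegrable (fun w => (w - z)⁻¹ • f w - (w - z₀)⁻¹ • f w) 0 ρ :=
    ((hinv.smul hfc).sub (hinv₀.smul hfc)).circleIntegrable hρ.le
  have ci3 : CircleIntegrable (fun w => (z - z₀) • ((w - z₀) ^ 2)⁻¹ • f w) 0 ρ :=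
    ((continuousOn_const.fun_smul (hinv₀2.fun_smul hfc))).circleIntegrable hρ.le
  have split :
      (∮ w in C(0, ρ), (w - z)⁻¹ • f w) - (∮ w in C(0, ρ), (w - z₀)⁻¹ • f w) - (z - z₀) • D
        = ∮ w in C(0, ρ), ((z - z₀) ^ 2 * ((w - z) * (w - z₀) ^ 2)⁻¹) • f w := by
    have e3 : (z - z₀) • D
        = ∮ w in C(0, ρ), (z - z₀) • (((w - z₀) ^ 2)⁻¹ • f w) :=
      (circleIntegral.integral_smul (z - z₀) (fun w => ((w - z₀) ^ 2)⁻¹ • f w) 0 ρ).symm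
    have e1 : (∮ w in C(0, ρ), ((w - z)⁻¹ • f w - (w - z₀)⁻¹ • f w
          - (z - z₀) • (((w - z₀) ^ 2)⁻¹ • f w)))
        = (∮ w in C(0, ρ), (w - z)⁻¹ • f w) - (∮ w in C(0, ρ), (w - z₀)⁻¹ • f w)
          - ∮ w in C(0, ρ), (z - z₀) • (((w - z₀) ^ 2)⁻¹ • f w) := by
      rw [circleIntegral.integral_sub ci12 ci3, circleIntegral.integral_sub ci1 ci2]
    rw [e3, ← e1]
    refine circleIntegral.integral_congr hρ.le fun w hw => ?_
    have h1 : w - z ≠ 0 := sub_ne_zero.2 (hwz w hw)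
    have h2 : w - z₀ ≠ 0 := sub_ne_zero.2 (hwz₀ w hw)
    simp only [smul_eq_mul]
    field_simp
    ring
  rw [split]
  have bound : ‖∮ w in C(0, ρ), ((z - z₀) ^ 2 * ((w - z) * (w - z₀) ^ 2)⁻¹) • f w‖
      ≤ 2 * π * ρ * (‖z - z₀‖ ^ 2 * (2 / d ^ 3) * M') := by
    refine circleIntegral.norm_integral_le_of_norm_le_const hρ.le fun w hw => ?_
    have h1 := hw1 w hw
    have h2 := hw2 w hw
    have h2' : 0 < ‖w - z‖ := lt_of_lt_of_le (by linarith) h2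
    have h1' : 0 < ‖w - z₀‖ := lt_of_lt_of_le hd h1
    rw [norm_smul, norm_mul, norm_inv, norm_mul, norm_pow, norm_pow]
    have hb1 : (‖w - z‖ * ‖w - z₀‖ ^ 2)⁻¹ ≤ ((d / 2) * d ^ 2)⁻¹ := by
      apply inv_anti₀
      · positivity
      · exact mul_le_mul h2 (by nlinarith) (by positivity) (by positivity)
    calc ‖z - z₀‖ ^ 2 * (‖w - z‖ * ‖w - z₀‖ ^ 2)⁻¹ * ‖f w‖
        ≤ ‖z - z₀‖ ^ 2 * ((d / 2) * d ^ 2)⁻¹ * M' := by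
          apply mul_le_mul
          · exact mul_le_mul_of_nonneg_left hb1 (by positivity)
          · exact hM' w hw
          · exact norm_nonneg _
          · positivity
      _ = ‖z - z₀‖ ^ 2 * (2 / d ^ 3) * M' := by
          congr 2
          rw [eq_div_iff (by positivity)]
          field_simp
  refine bound.trans ?_
  have key : 2 * π * ρ * (‖z - z₀‖ ^ 2 * (2 / d ^ 3) * M') ≤ K * ‖z - z₀‖ ^ 2 := by
    rw [hK]
    have e : 2 * π * ρ * (‖z - z₀‖ ^ 2 * (2 / d ^ 3) * M')
        = 4 * π * ρ * M' * ‖z - z₀‖ ^ 2 / d ^ 3 := by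
      field_simp; ring
    rw [e, div_mul_eq_mul_div, div_le_div_iff₀ (by positivity) (by positivity)]
    nlinarith [sq_nonneg (‖z - z₀‖), pi_pos, hM'0, hρ.le, pow_pos hd 3,
      mul_pos (mul_pos pi_pos hρ) (pow_pos hd 3)]
  refine key.trans ?_
  have : K * ‖z - z₀‖ ^ 2 = (K * ‖z - z₀‖) * ‖z - z₀‖ := by ring
  rw [this]
  apply mul_le_mul_of_nonneg_right _ (norm_nonneg _)
  calc K * ‖z - z₀‖ ≤ K * (c / K) := mul_le_mul_of_nonneg_left hz2 hKpos.le
    _ = c := by field_simp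




/-- Decomposition `O(𝔻 − 0) = O(𝔻) ⊕ ℂ{z⁻¹}`: a function holomorphic on the punctured
disk of radius `r` (with `0 < r ≤ ∞`) decomposes uniquely as `g + h`, where `g` is
holomorphic on the full disk and `h` is holomorphic on `ℂ ∖ {0}` and tends to `0` at
infinity. -/
theorem punctured_disk_decomposition (r : ENNReal) (hr : 0 < r) (f : ℂ → ℂ)
    (hf : DifferentiableOn ℂ f ({z : ℂ | (‖z‖₊ : ENNReal) < r} \ {0})) :
    ∃ g h : ℂ → ℂ,
      DifferentiableOn ℂ g {z : ℂ | (‖z‖₊ : ENNReal) < r} ∧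
      DifferentiableOn ℂ h {(0 : ℂ)}ᶜ ∧
      Tendsto h (Bornology.cobounded ℂ) (nhds 0) ∧
      (∀ z ∈ {z : ℂ | (‖z‖₊ : ENNReal) < r} \ {0}, f z = g z + h z) ∧
      (∀ g' h' : ℂ → ℂ,
        DifferentiableOn ℂ g' {z : ℂ | (‖z‖₊ : ENNReal) < r} →
        DifferentiableOn ℂ h' {(0 : ℂ)}ᶜ →
        Tendsto h' (Bornology.cobounded ℂ) (nhds 0) →
        (∀ z ∈ {z : ℂ | (‖z‖₊ : ENNReal) < r} \ {0}, f z = g' z + h' z) →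
        (EqOn g g' {z : ℂ | (‖z‖₊ : ENNReal) < r} ∧ EqOn h h' {(0 : ℂ)}ᶜ)) := by
  set S : Set ℂ := {z : ℂ | (‖z‖₊ : ENNReal) < r} with hS
  have hmem : ∀ z : ℂ, z ∈ S ↔ ENNReal.ofReal ‖z‖ < r := by
    intro z
    rw [hS, mem_setOf_eq, ofReal_norm, enorm_eq_nnnorm]
  have hSopen : IsOpen S := by
    have : S = (fun z : ℂ => ENNReal.ofReal ‖z‖) ⁻¹' (Iio r) := by
      ext z; simp [hmem z, mem_preimage]
    rw [this]
    exact (ENNReal.continuous_ofReal.comp continuous_norm).isOpen_preimage _ isOpen_Iio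
  have h0S : (0 : ℂ) ∈ S := by
    rw [hmem]; simpa using hr
  -- the punctured disk is open
  have hPopen : IsOpen (S \ {0}) := hSopen.sdiff isClosed_singleton
  have hfd : ∀ z ∈ S \ {0}, DifferentiableAt ℂ f z :=
    fun z hz => hf.differentiableAt (hPopen.mem_nhds hz)
  have hfc : ContinuousOn f (S \ {0}) := hf.continuousOn
  -- spheres and annuli inside the punctured disk
  have sphere_sub : ∀ {t : ℝ}, 0 < t → ENNReal.ofReal t < r → sphere (0:ℂ) t ⊆ S \ {0} := by
    intro t ht htr w hw
    rw [mem_sphere_zero_iff_norm] at hw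
    refine ⟨(hmem w).2 (by rw [hw]; exact htr), ?_⟩
    simp only [mem_singleton_iff]
    intro h0
    rw [h0, norm_zero] at hw
    exact ht.ne hw
  have annulus_sub : ∀ {ρ R : ℝ}, 0 < ρ → ENNReal.ofReal R < r →
      closedBall (0:ℂ) R \ ball 0 ρ ⊆ S \ {0} := by
    rintro ρ R hρ hR w ⟨hw1, hw2⟩
    rw [mem_closedBall_zero_iff] at hw1
    rw [mem_ball_zero_iff, not_lt] at hw2
    refine ⟨(hmem w).2 (lt_of_le_of_lt (ENNReal.ofReal_le_ofReal hw1) hR), ?_⟩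
    simp only [mem_singleton_iff]
    intro h0
    rw [h0, norm_zero] at hw2
    exact absurd hw2 (not_le.2 hρ)
  -- existence of suitable radii
  have exR : ∀ z ∈ S, ∃ R : ℝ, ‖z‖ < R ∧ ENNReal.ofReal R < r := by
    intro z hz
    obtain ⟨R, hR0, h1, h2⟩ := ENNReal.lt_iff_exists_real_btwn.1 ((hmem z).1 hz)
    exact ⟨R, (ENNReal.ofReal_lt_ofReal_iff_of_nonneg (norm_nonneg z)).1 h1, h2⟩
  have exρ : ∀ z : ℂ, z ≠ 0 → ∃ ρ : ℝ, 0 < ρ ∧ ρ < ‖z‖ ∧ ENNReal.ofReal ρ < r := by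
    intro z hz
    have h1 : (0 : ENNReal) < min (ENNReal.ofReal ‖z‖) r :=
      lt_min (ENNReal.ofReal_pos.2 (norm_pos_iff.2 hz)) hr
    obtain ⟨ρ, hρ0, h2, h3⟩ := ENNReal.lt_iff_exists_real_btwn.1 h1
    refine ⟨ρ, ENNReal.ofReal_pos.1 (pos_of_gt h2), ?_, lt_of_lt_of_le h3 (min_le_right _ _)⟩
    have := lt_of_lt_of_le h3 (min_le_left _ _)
    exact (ENNReal.ofReal_lt_ofReal_iff_of_nonneg hρ0).1 this
  -- the normalized Cauchy integral
  set Cint : ℝ → ℂ → ℂ :=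
    fun t z => (2 * ↑π * Complex.I)⁻¹ • ∮ w in C(0, t), (w - z)⁻¹ • f w with hCint
  -- deformation invariance
  have deform : ∀ {t₁ t₂ : ℝ} {z : ℂ}, 0 < t₁ → t₁ ≤ t₂ → ENNReal.ofReal t₂ < r →
      z ∉ closedBall (0:ℂ) t₂ \ ball 0 t₁ → Cint t₁ z = Cint t₂ z := by
    intro t₁ t₂ z h1 h12 h2 hz
    have key : (∮ w in C(0, t₂), (w - z)⁻¹ • f w) = ∮ w in C(0, t₁), (w - z)⁻¹ • f w := by
      refine Complex.circleIntegral_eq_of_differentiable_on_annulus_off_countable h1 h12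
        countable_empty ?_ ?_
      · refine ContinuousOn.fun_smul ?_ (hfc.mono (annulus_sub h1 h2))
        exact (continuousOn_id.sub continuousOn_const).inv₀
          fun w hw => sub_ne_zero.2 (fun hwz => hz ((show w = z from hwz) ▸ hw))
      · rintro w ⟨hw, -⟩
        have hw' : w ∈ closedBall (0:ℂ) t₂ \ ball 0 t₁ :=
          ⟨ball_subset_closedBall hw.1, fun hc => hw.2 (ball_subset_closedBall hc)⟩
        refine DifferentiableAt.fun_smul ?_ (hfd w (annulus_sub h1 h2 hw'))
        exact (differentiableAt_id.sub_const z).inv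
          (sub_ne_zero.2 fun hwz => hz (hwz ▸ hw'))
    simp only [hCint]
    rw [key]
  choose! Rch hRch1 hRch2 using exR
  choose! ρch hρch1 hρch2 hρch3 using exρ
  classical
  set g : ℂ → ℂ := fun z => if hz : z ∈ S then Cint (Rch z) z else 0 with hg
  set h : ℂ → ℂ := fun z => if z = 0 then 0 else -Cint (ρch z) z with hh
  -- g and h do not depend on the chosen radius
  have gspec : ∀ {z : ℂ}, z ∈ S → ∀ {R : ℝ}, ‖z‖ < R → ENNReal.ofReal R < r →
      g z = Cint R z := by
    intro z hz R h1 h2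
    rw [hg]
    simp only [dif_pos hz]
    have hz1 := hRch1 z hz
    have hz2 := hRch2 z hz
    rcases le_total (Rch z) R with hle | hle
    · refine deform (lt_of_le_of_lt (norm_nonneg z) hz1) hle h2 ?_
      rintro ⟨-, hc⟩
      exact hc (mem_ball_zero_iff.2 hz1)
    · refine (deform (lt_of_le_of_lt (norm_nonneg z) h1) hle hz2 ?_).symm
      rintro ⟨-, hc⟩
      exact hc (mem_ball_zero_iff.2 h1)
  have hspec : ∀ {z : ℂ}, z ≠ 0 → ∀ {ρ : ℝ}, 0 < ρ → ρ < ‖z‖ → ENNReal.ofReal ρ < r →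
      h z = -Cint ρ z := by
    intro z hz ρ h1 h2 h3
    rw [hh]
    simp only [if_neg hz, neg_inj]
    have hz1 := hρch1 z hz
    have hz2 := hρch2 z hz
    have hz3 := hρch3 z hz
    rcases le_total (ρch z) ρ with hle | hle
    · refine deform hz1 hle h3 ?_
      rintro ⟨hc, -⟩
      exact absurd (mem_closedBall_zero_iff.1 hc) (not_le.2 h2)
    · refine (deform h1 hle hz3 ?_).symm
      rintro ⟨hc, -⟩
      exact absurd (mem_closedBall_zero_iff.1 hc) (not_le.2 hz2)
  -- the decomposition
  have decomp : ∀ z ∈ S \ {0}, f z = g z + h z := by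
    rintro z ⟨hzS, hz0⟩
    rw [mem_singleton_iff] at hz0
    have hR1 := hRch1 z hzS
    have hR2 := hRch2 z hzS
    have hρ1 := hρch1 z hz0
    have hρ2 := hρch2 z hz0
    have hρ3 := hρch3 z hz0
    rw [gspec hzS hR1 hR2, hspec hz0 hρ1 hρ2 hρ3]
    have key := annulus_cauchy_formula hρ1 hρ2 hR1 (hf.mono (annulus_sub hρ1 hR2))
    simp only [hCint]
    rw [← sub_eq_add_neg, ← smul_sub, key, smul_smul,
      inv_mul_cancel₀ Complex.two_pi_I_ne_zero, one_smul]
  -- differentiability of g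
  have gdiff : DifferentiableOn ℂ g S := by
    intro z₀ hz₀
    have hR1 := hRch1 z₀ hz₀
    have hR2 := hRch2 z₀ hz₀
    have hRpos : 0 < Rch z₀ := lt_of_le_of_lt (norm_nonneg z₀) hR1
    have heq : ∀ w ∈ ball (0:ℂ) (Rch z₀), g w = Cint (Rch z₀) w := by
      intro w hw
      rw [mem_ball_zero_iff] at hw
      exact gspec ((hmem w).2 (lt_of_le_of_lt (ENNReal.ofReal_le_ofReal hw.le) hR2)) hw hR2
    have hci : CircleIntegrable f 0 ((Rch z₀).toNNReal : ℝ) := by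
      rw [Real.coe_toNNReal _ hRpos.le]
      exact (hfc.mono (sphere_sub hRpos hR2)).circleIntegrable hRpos.le
    have hps := hasFPowerSeriesOn_cauchy_integral (f := f) (c := 0) hci
      (Real.toNNReal_pos.2 hRpos)
    have hz₀mem : z₀ ∈ Metric.eball (0:ℂ) ((Rch z₀).toNNReal : ENNReal) := by
      rw [Metric.mem_eball, edist_zero_right, enorm_eq_nnnorm]
      exact_mod_cast (Real.lt_toNNReal_iff_coe_lt).2 (by exact_mod_cast hR1)
    have hCR := hps.differentiableOn.differentiableAt (Metric.isOpen_eball.mem_nhds hz₀mem)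
    simp only [Real.coe_toNNReal _ hRpos.le] at hCR
    have hCR' : DifferentiableAt ℂ (Cint (Rch z₀)) z₀ := by
      simp only [hCint]
      exact hCR
    refine DifferentiableAt.differentiableWithinAt ?_
    exact hCR'.congr_of_eventuallyEq
      (eventually_of_mem (isOpen_ball.mem_nhds (mem_ball_zero_iff.2 hR1)) heq)
  -- differentiability of h away from 0
  have hdiff : DifferentiableOn ℂ h {(0:ℂ)}ᶜ := by
    intro z₀ hz₀mem
    have hz₀ : z₀ ≠ 0 := by simpa using hz₀mem
    have hρ1 := hρch1 z₀ hz₀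
    have hρ2 := hρch2 z₀ hz₀
    have hρ3 := hρch3 z₀ hz₀
    have key := cauchy_integral_diffAt_outside hρ1
      (hfc.mono (sphere_sub hρ1 hρ3)) hρ2
    have hopen : IsOpen {z : ℂ | ρch z₀ < ‖z‖} := isOpen_lt continuous_const continuous_norm
    have heq : ∀ z ∈ {z : ℂ | ρch z₀ < ‖z‖},
        h z = -((2 * ↑π * Complex.I)⁻¹ • ∮ w in C(0, ρch z₀), (w - z)⁻¹ • f w) := by
      intro z hz
      have hz0 : z ≠ 0 := by
        intro e
        rw [mem_setOf_eq, e, norm_zero] at hz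
        exact absurd hz (not_lt.2 hρ1.le)
      rw [hspec hz0 hρ1 hz hρ3]
    have hd : DifferentiableAt ℂ
        (fun z => -((2 * ↑π * Complex.I)⁻¹ • ∮ w in C(0, ρch z₀), (w - z)⁻¹ • f w)) z₀ :=
      (key.fun_const_smul _).fun_neg
    exact (hd.congr_of_eventuallyEq
      (eventually_of_mem (hopen.mem_nhds hρ2) heq)).differentiableWithinAt
  -- decay of h at infinity
  have htend : Tendsto h (Bornology.cobounded ℂ) (nhds 0) := by
    obtain ⟨ρ, hρ0', h1, h2⟩ := ENNReal.lt_iff_exists_real_btwn.1 hr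
    have hρpos : 0 < ρ := ENNReal.ofReal_pos.1 h1
    obtain ⟨M, hM⟩ := (isCompact_sphere (0:ℂ) ρ).exists_bound_of_continuousOn
      (hfc.mono (sphere_sub hρpos h2))
    set M' : ℝ := max M 0 with hM'def
    have hM'0 : 0 ≤ M' := le_max_right _ _
    have hM' : ∀ w ∈ sphere (0:ℂ) ρ, ‖f w‖ ≤ M' := fun w hw => (hM w hw).trans (le_max_left _ _)
    have hnorm2pi : ‖(2 * (↑π) * Complex.I)⁻¹‖ = (2 * π)⁻¹ := by
      rw [norm_inv, norm_mul, norm_mul, Complex.norm_I, mul_one, Complex.norm_real,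
        Real.norm_eq_abs, abs_of_pos pi_pos]
      norm_num
    have hbound : ∀ z : ℂ, ρ < ‖z‖ → ‖h z‖ ≤ ρ * M' / (‖z‖ - ρ) := by
      intro z hz
      have hz0 : z ≠ 0 := by
        intro e; rw [e, norm_zero] at hz; exact absurd hz (not_lt.2 hρpos.le)
      have hd0 : 0 < ‖z‖ - ρ := sub_pos.2 hz
      rw [hspec hz0 hρpos hz h2]
      simp only [hCint, norm_neg, norm_smul, hnorm2pi]
      have hint : ‖∮ w in C(0, ρ), (w - z)⁻¹ • f w‖ ≤ 2 * π * ρ * ((‖z‖ - ρ)⁻¹ * M') := by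
        refine circleIntegral.norm_integral_le_of_norm_le_const hρpos.le fun w hw => ?_
        have hbw : ‖z‖ - ρ ≤ ‖w - z‖ := by
          rw [mem_sphere_zero_iff_norm] at hw
          have h3 := norm_sub_norm_le z w
          rw [norm_sub_rev z w] at h3
          linarith
        rw [norm_smul, norm_inv]
        exact mul_le_mul (inv_anti₀ hd0 hbw) (hM' w hw) (norm_nonneg _) (by positivity)
      calc (2 * π)⁻¹ * ‖∮ w in C(0, ρ), (w - z)⁻¹ • f w‖
          ≤ (2 * π)⁻¹ * (2 * π * ρ * ((‖z‖ - ρ)⁻¹ * M')) := by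
            exact mul_le_mul_of_nonneg_left hint (by positivity)
        _ = ((2 * π)⁻¹ * (2 * π)) * (ρ * M' * (‖z‖ - ρ)⁻¹) := by ring
        _ = ρ * M' / (‖z‖ - ρ) := by
            rw [inv_mul_cancel₀ (by positivity : (2 * π : ℝ) ≠ 0), one_mul, div_eq_mul_inv]
    have ev : ∀ᶠ z : ℂ in Bornology.cobounded ℂ, ‖h z‖ ≤ ρ * M' / (‖z‖ - ρ) := by
      filter_upwards [tendsto_norm_cobounded_atTop.eventually (eventually_gt_atTop ρ)] with z hz
      exact hbound z hz
    refine squeeze_zero_norm' ev ?_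
    have h4 : Tendsto (fun x : ℝ => ρ * M' / (x - ρ)) atTop (nhds 0) := by
      apply Tendsto.div_atTop (tendsto_const_nhds)
      simpa [sub_eq_add_neg] using tendsto_atTop_add_const_right atTop (-ρ) tendsto_id
    exact h4.comp tendsto_norm_cobounded_atTop
  -- conclusion and uniqueness
  refine ⟨g, h, gdiff, hdiff, htend, decomp, ?_⟩
  intro g' h' hg' hh' hth' heq'
  classical
  set F : ℂ → ℂ := fun z => if z = 0 then g z - g' z else h' z - h z with hF
  have hFS : ∀ z ∈ S, F z = g z - g' z := by
    intro z hz
    by_cases hz0 : z = 0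
    · simp only [hF, hz0, if_pos rfl]
    · simp only [hF, if_neg hz0]
      have e1 := decomp z ⟨hz, hz0⟩
      have e2 := heq' z ⟨hz, hz0⟩
      linear_combination e1 - e2
  have hF0 : ∀ z : ℂ, z ≠ 0 → F z = h' z - h z := by
    intro z hz
    simp only [hF, if_neg hz]
  have hFdiff : Differentiable ℂ F := by
    intro z
    by_cases hz : z ∈ S
    · have hd : DifferentiableAt ℂ (fun w => g w - g' w) z :=
        (gdiff.differentiableAt (hSopen.mem_nhds hz)).sub
          (hg'.differentiableAt (hSopen.mem_nhds hz))
      exact hd.congr_of_eventuallyEq (eventually_of_mem (hSopen.mem_nhds hz) hFS)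
    · have hz0 : z ≠ 0 := fun e => hz (e ▸ h0S)
      have hzc : z ∈ ({(0:ℂ)}ᶜ : Set ℂ) := by simpa using hz0
      have hd : DifferentiableAt ℂ (fun w => h' w - h w) z :=
        (hh'.differentiableAt (isOpen_compl_singleton.mem_nhds hzc)).sub
          (hdiff.differentiableAt (isOpen_compl_singleton.mem_nhds hzc))
      refine hd.congr_of_eventuallyEq
        (eventually_of_mem (isOpen_compl_singleton.mem_nhds hzc) fun w hw => ?_)
      exact hF0 w (by simpa using hw)
  have hFtend : Tendsto F (Bornology.cobounded ℂ) (nhds 0) := by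
    have ev : ∀ᶠ z : ℂ in Bornology.cobounded ℂ, F z = h' z - h z := by
      filter_upwards [tendsto_norm_cobounded_atTop.eventually (eventually_gt_atTop 0)] with z hz
      exact hF0 z (norm_pos_iff.1 hz)
    have ht : Tendsto (fun z => h' z - h z) (Bornology.cobounded ℂ) (nhds 0) := by
      simpa using hth'.sub htend
    exact ht.congr' (Filter.EventuallyEq.symm ev)
  have hFzero : ∀ z, F z = 0 := by
    intro z
    apply hFdiff.apply_eq_of_tendsto_cocompact z
    rwa [← cobounded_eq_cocompact]
  refine ⟨fun z hz => ?_, fun z hz => ?_⟩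
  · have := hFS z hz
    rw [hFzero z] at this
    exact sub_eq_zero.1 this.symm
  · have hz0 : z ≠ 0 := by simpa using hz
    have := hF0 z hz0
    rw [hFzero z] at this
    exact (sub_eq_zero.1 this.symm).symm
end

section
/- For n ≥ 2, every function holomorphic on ℂⁿ ∖ {0} extends to a holomorphic function on all of ℂⁿ. -/
open Complex Metric MeasureTheory Set Function Filter

namespace HartogsPuncture

variable {n : ℕ} [NeZero n]

/-- The good set of parameters. -/
def V (n : ℕ) [NeZero n] : Set ((Fin n → ℂ) × ℂ) :=
  ((fun p : (Fin n → ℂ) × ℂ => Function.update p.1 0 p.2) ⁻¹' {0}ᶜ) ∩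
    ((fun p : (Fin n → ℂ) × ℂ => p.2 - p.1 0) ⁻¹' {0}ᶜ)

noncomputable def Ψ (f : (Fin n → ℂ) → ℂ) (p : (Fin n → ℂ) × ℂ) : ℂ :=
  (p.2 - p.1 0)⁻¹ * f (Function.update p.1 0 p.2)

lemma upd_cont : Continuous (fun p : (Fin n → ℂ) × ℂ => Function.update p.1 0 p.2) :=
  Continuous.update continuous_fst 0 continuous_snd

lemma upd_diff : Differentiable ℂ (fun p : (Fin n → ℂ) × ℂ => Function.update p.1 0 p.2) := by
  rw [differentiable_pi]
  intro i
  rcases eq_or_ne i 0 with h | h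
  · subst h
    simp only [Function.update_self]
    exact differentiable_snd
  · simp only [Function.update_of_ne h]
    exact (ContinuousLinearMap.proj (R := ℂ) (φ := fun _ : Fin n => ℂ) i).differentiable.comp
      differentiable_fst

lemma V_open : IsOpen (V n) :=
  (isOpen_compl_singleton.preimage upd_cont).inter
    (isOpen_compl_singleton.preimage
      (continuous_snd.sub ((continuous_apply (0 : Fin n)).comp continuous_fst)))

lemma mem_V {z : Fin n → ℂ} {w : ℂ} (hz : ‖z 0‖ < 1) (hw : ‖w‖ = 1) : (z, w) ∈ V n := by
  constructor
  · intro h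
    simp only [mem_preimage, Set.mem_singleton_iff] at h
    have := congrFun h 0
    rw [Function.update_self] at this
    simp only [Pi.zero_apply] at this
    rw [this] at hw
    simp at hw
  · simp only [mem_preimage, mem_compl_iff, Set.mem_singleton_iff, sub_eq_zero]
    intro h
    rw [← h, hw] at hz
    exact lt_irrefl _ hz

variable {f : (Fin n → ℂ) → ℂ}

lemma psi_diffAt (hf : DifferentiableOn ℂ f {(0 : Fin n → ℂ)}ᶜ) {p : (Fin n → ℂ) × ℂ}
    (hp : p ∈ V n) : DifferentiableAt ℂ (Ψ f) p := by
  have h1 : DifferentiableAt ℂ (fun p : (Fin n → ℂ) × ℂ => (p.2 - p.1 0)⁻¹) p := by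
    refine DifferentiableAt.inv ?_ hp.2
    exact (differentiable_snd.sub (((ContinuousLinearMap.proj (R := ℂ)
      (φ := fun _ : Fin n => ℂ) 0).differentiable).comp differentiable_fst)) p
  have h2 : DifferentiableAt ℂ (fun p : (Fin n → ℂ) × ℂ => f (Function.update p.1 0 p.2)) p :=
    (hf.differentiableAt (isOpen_compl_singleton.mem_nhds hp.1)).comp p (upd_diff p)
  exact h1.mul h2

lemma psi_contOn (hf : DifferentiableOn ℂ f {(0 : Fin n → ℂ)}ᶜ) : ContinuousOn (Ψ f) (V n) :=
  fun p hp => ((psi_diffAt hf hp).continuousAt).continuousWithinAt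

/-- Cauchy estimate for the Fréchet derivative of a holomorphic function on a ball. -/
lemma norm_fderiv_le {E : Type*} [NormedAddCommGroup E] [NormedSpace ℂ E] {g : E → ℂ}
    {p : E} {δ M : ℝ} (hδ : 0 < δ)
    (hd : ∀ q ∈ closedBall p δ, DifferentiableAt ℂ g q)
    (hM : ∀ q ∈ closedBall p δ, ‖g q‖ ≤ M) :
    ‖fderiv ℂ g p‖ ≤ M / δ := by
  have hM0 : 0 ≤ M := (norm_nonneg _).trans (hM p (mem_closedBall_self hδ.le))
  refine ContinuousLinearMap.opNorm_le_bound _ (div_nonneg hM0 hδ.le) fun v => ?_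
  rcases eq_or_ne v 0 with rfl | hv
  · simp
  have hvn : (0:ℝ) < ‖v‖ := norm_pos_iff.mpr hv
  set u : E := ((‖v‖ : ℂ))⁻¹ • v with hu
  have hun : ‖u‖ = 1 := by
    rw [hu, norm_smul]
    simp only [norm_inv, Complex.norm_real, norm_norm]
    field_simp
  have hline : ∀ t : ℂ, t ∈ closedBall (0:ℂ) δ → p + t • u ∈ closedBall p δ := by
    intro t ht
    rw [mem_closedBall, dist_eq_norm] at ht ⊢
    simp only [add_sub_cancel_left, norm_smul, hun, mul_one]
    simpa using ht
  have hmap : Differentiable ℂ fun t : ℂ => p + t • u :=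
    (differentiable_id.smul_const u).const_add p
  have hd₁ : ∀ t ∈ closedBall (0:ℂ) δ, DifferentiableAt ℂ (fun t : ℂ => g (p + t • u)) t :=
    fun t ht => (hd _ (hline t ht)).comp t (hmap t)
  have hdc : DiffContOnCl ℂ (fun t : ℂ => g (p + t • u)) (ball (0:ℂ) δ) := by
    constructor
    · exact fun t ht => (hd₁ t (ball_subset_closedBall ht)).differentiableWithinAt
    · rw [closure_ball _ hδ.ne']
      exact fun t ht => (hd₁ t ht).continuousAt.continuousWithinAt
  have hder : HasDerivAt (fun t : ℂ => g (p + t • u)) (fderiv ℂ g p u) 0 := by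
    have h1 : HasDerivAt (fun t : ℂ => p + t • u) u 0 := by
      simpa using ((hasDerivAt_id (0:ℂ)).smul_const u).const_add p
    have h2 : HasFDerivAt g (fderiv ℂ g p) ((fun t : ℂ => p + t • u) 0) := by
      simpa using (hd p (mem_closedBall_self hδ.le)).hasFDerivAt
    exact h2.comp_hasDerivAt 0 h1
  have hbound : ‖deriv (fun t : ℂ => g (p + t • u)) 0‖ ≤ M / δ :=
    Complex.norm_deriv_le_of_forall_mem_sphere_norm_le hδ hdc fun z hz =>
      hM _ (hline z (sphere_subset_closedBall hz))
  rw [hder.deriv] at hbound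
  have hvc : v = ((‖v‖ : ℂ)) • u := by
    rw [hu, smul_smul, mul_inv_cancel₀ (by exact_mod_cast hvn.ne'), one_smul]
  calc ‖fderiv ℂ g p v‖ = ‖v‖ * ‖fderiv ℂ g p u‖ := by
        conv_lhs => rw [hvc]
        rw [(fderiv ℂ g p).map_smul, norm_smul]
        simp
    _ ≤ ‖v‖ * (M / δ) := mul_le_mul_of_nonneg_left hbound (norm_nonneg v)
    _ = M / δ * ‖v‖ := mul_comm _ _

noncomputable def G (f : (Fin n → ℂ) → ℂ) (z : Fin n → ℂ) (θ : ℝ) : ℂ :=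
  deriv (circleMap 0 1) θ • Ψ f (z, circleMap 0 1 θ)

noncomputable def G' (f : (Fin n → ℂ) → ℂ) (z : Fin n → ℂ) (θ : ℝ) : (Fin n → ℂ) →L[ℂ] ℂ :=
  deriv (circleMap 0 1) θ •
    ((fderiv ℂ (Ψ f) (z, circleMap 0 1 θ)).comp (ContinuousLinearMap.inl ℂ (Fin n → ℂ) ℂ))

lemma mem_V_circle {z : Fin n → ℂ} (hz : ‖z 0‖ < 1) (θ : ℝ) : (z, circleMap 0 1 θ) ∈ V n :=
  mem_V hz (by simp [norm_circleMap_zero])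

lemma hasFDerivAt_G (hf : DifferentiableOn ℂ f {(0 : Fin n → ℂ)}ᶜ) {z : Fin n → ℂ} {θ : ℝ}
    (hz : ‖z 0‖ < 1) : HasFDerivAt (fun z => G f z θ) (G' f z θ) z := by
  have h := (psi_diffAt hf (mem_V_circle hz θ)).hasFDerivAt
  exact ((HasFDerivAt.comp (f := fun e : Fin n → ℂ => (e, circleMap 0 1 θ)) z h
    (hasFDerivAt_prodMk_left (𝕜 := ℂ) z (circleMap 0 1 θ))).const_smul (deriv (circleMap 0 1) θ) :)

noncomputable def Fe (f : (Fin n → ℂ) → ℂ) (z : Fin n → ℂ) : ℂ :=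
  (2 * Real.pi * Complex.I)⁻¹ • ∫ θ in Set.Ioc (0:ℝ) (2 * Real.pi), G f z θ

lemma contG (hf : DifferentiableOn ℂ f {(0 : Fin n → ℂ)}ᶜ) {z : Fin n → ℂ} (hz : ‖z 0‖ < 1) :
    Continuous (G f z) := by
  have h1 : Continuous fun θ : ℝ => ((z, circleMap 0 1 θ) : (Fin n → ℂ) × ℂ) :=
    continuous_const.prodMk (continuous_circleMap 0 1)
  have h2 : Continuous fun θ : ℝ => Ψ f (z, circleMap 0 1 θ) :=
    (psi_contOn hf).comp_continuous h1 fun θ => mem_V_circle hz θ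
  have h3 : Continuous fun θ : ℝ => deriv (circleMap 0 1) θ := by
    simp only [deriv_circleMap]
    exact (continuous_circleMap 0 1).mul continuous_const
  exact h3.smul h2

lemma measG' (x₀ : Fin n → ℂ) :
    AEStronglyMeasurable (G' f x₀) (volume.restrict (Set.Ioc (0:ℝ) (2 * Real.pi))) := by
  have hm0 : Measurable fun θ : ℝ => fderiv ℂ (Ψ f) (x₀, circleMap 0 1 θ) :=
    (measurable_fderiv ℂ (Ψ f)).comp
      ((continuous_const.prodMk (continuous_circleMap 0 1)).measurable)
  have hcont : Continuous fun A : ((Fin n → ℂ) × ℂ) →L[ℂ] ℂ =>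
      A.comp (ContinuousLinearMap.inl ℂ (Fin n → ℂ) ℂ) := by
    have := ((ContinuousLinearMap.compL ℂ (Fin n → ℂ) ((Fin n → ℂ) × ℂ) ℂ).flip
      (ContinuousLinearMap.inl ℂ (Fin n → ℂ) ℂ)).continuous
    exact this
  have hm1 : Measurable fun θ : ℝ =>
      (fderiv ℂ (Ψ f) (x₀, circleMap 0 1 θ)).comp (ContinuousLinearMap.inl ℂ (Fin n → ℂ) ℂ) :=
    hcont.measurable.comp hm0
  have h3 : Continuous fun θ : ℝ => deriv (circleMap 0 1) θ := by
    simp only [deriv_circleMap]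
    exact (continuous_circleMap 0 1).mul continuous_const
  exact (h3.aestronglyMeasurable.smul hm1.aestronglyMeasurable)

lemma Fe_diffAt (hf : DifferentiableOn ℂ f {(0 : Fin n → ℂ)}ᶜ) {x₀ : Fin n → ℂ}
    (hx : ‖x₀ 0‖ < 1) : DifferentiableAt ℂ (Fe f) x₀ := by
  set ε : ℝ := (1 - ‖x₀ 0‖) / 2 with hεdef
  have hε : 0 < ε := by rw [hεdef]; have := norm_nonneg (x₀ 0); linarith
  have hball : ∀ x ∈ closedBall x₀ ε, ‖x 0‖ < 1 := by
    intro x hx'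
    have h1 : ‖x 0 - x₀ 0‖ ≤ ‖x - x₀‖ := by
      have := norm_le_pi_norm (x - x₀) 0
      simpa using this
    have h2 : ‖x - x₀‖ ≤ ε := by rwa [mem_closedBall, dist_eq_norm] at hx'
    calc ‖x 0‖ ≤ ‖x₀ 0‖ + ‖x 0 - x₀ 0‖ := by
          simpa using norm_add_le (x₀ 0) (x 0 - x₀ 0)
      _ ≤ ‖x₀ 0‖ + ε := by linarith [h1.trans h2]
      _ < 1 := by rw [hεdef]; linarith
  set K : Set ((Fin n → ℂ) × ℂ) := (closedBall x₀ ε) ×ˢ (sphere (0:ℂ) 1) with hKdef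
  have hK : IsCompact K := (isCompact_closedBall _ _).prod (isCompact_sphere _ _)
  have hKV : K ⊆ V n := by
    rintro ⟨z, w⟩ ⟨hz, hw⟩
    exact mem_V (hball z hz) (by simpa [mem_sphere_iff_norm] using hw)
  obtain ⟨δ, hδpos, hthick⟩ := hK.exists_cthickening_subset_open V_open hKV
  obtain ⟨M, hM⟩ := (hK.cthickening (r := δ)).exists_bound_of_continuousOn
    ((psi_contOn hf).mono hthick)
  have hfdbound : ∀ p ∈ K, ‖fderiv ℂ (Ψ f) p‖ ≤ M / δ := fun p hp =>
    norm_fderiv_le hδpos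
      (fun q hq => psi_diffAt hf (hthick (closedBall_subset_cthickening hp δ hq)))
      (fun q hq => hM q (closedBall_subset_cthickening hp δ hq))
  have hG'bound : ∀ θ : ℝ, ∀ x ∈ ball x₀ ε, ‖G' f x θ‖ ≤ M / δ := by
    intro θ x hxb
    have hmem : ((x, circleMap 0 1 θ) : (Fin n → ℂ) × ℂ) ∈ K := by
      refine ⟨ball_subset_closedBall hxb, ?_⟩
      simp [mem_sphere_iff_norm, norm_circleMap_zero]
    have hA := hfdbound _ hmem
    have h1 : ‖deriv (circleMap 0 1) θ‖ = 1 := by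
      rw [deriv_circleMap]
      simp [map_mul, norm_circleMap_zero]
    calc ‖G' f x θ‖ = ‖deriv (circleMap 0 1) θ‖ *
          ‖(fderiv ℂ (Ψ f) (x, circleMap 0 1 θ)).comp
            (ContinuousLinearMap.inl ℂ (Fin n → ℂ) ℂ)‖ := by
            rw [G']
            exact norm_smul (deriv (circleMap 0 1) θ)
              ((fderiv ℂ (Ψ f) (x, circleMap 0 1 θ)).comp
                (ContinuousLinearMap.inl ℂ (Fin n → ℂ) ℂ))
      _ ≤ 1 * ‖fderiv ℂ (Ψ f) (x, circleMap 0 1 θ)‖ := by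
          rw [h1]
          refine mul_le_mul_of_nonneg_left ?_ zero_le_one
          refine ContinuousLinearMap.opNorm_le_bound _ (norm_nonneg _) fun v => ?_
          have hrw : ((fderiv ℂ (Ψ f) (x, circleMap 0 1 θ)).comp
              (ContinuousLinearMap.inl ℂ (Fin n → ℂ) ℂ)) v
              = (fderiv ℂ (Ψ f) (x, circleMap 0 1 θ)) (v, 0) := rfl
          rw [hrw]
          calc ‖(fderiv ℂ (Ψ f) (x, circleMap 0 1 θ)) (v, 0)‖
              ≤ ‖fderiv ℂ (Ψ f) (x, circleMap 0 1 θ)‖ * ‖((v, 0) : (Fin n → ℂ) × ℂ)‖ :=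
                (fderiv ℂ (Ψ f) (x, circleMap 0 1 θ)).le_opNorm _
            _ = ‖fderiv ℂ (Ψ f) (x, circleMap 0 1 θ)‖ * ‖v‖ := by
                rw [Prod.norm_def]; simp [max_eq_left (norm_nonneg v)]
      _ ≤ M / δ := by rw [one_mul]; exact hA
  have key : HasFDerivAt (fun z => ∫ θ in Set.Ioc (0:ℝ) (2 * Real.pi), G f z θ)
      (∫ θ in Set.Ioc (0:ℝ) (2 * Real.pi), G' f x₀ θ) x₀ := by
    apply hasFDerivAt_integral_of_dominated_of_fderiv_le (bound := fun _ => M / δ) (s := ball x₀ ε) (ball_mem_nhds x₀ hε)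
    · filter_upwards [ball_mem_nhds x₀ hε] with x hxb
      exact ((contG hf (hball x (ball_subset_closedBall hxb))).aestronglyMeasurable)
    · exact (contG hf hx).integrableOn_Ioc
    · exact measG' x₀
    · exact Filter.Eventually.of_forall fun θ x hxb => hG'bound θ x hxb
    · exact integrableOn_const measure_Ioc_lt_top.ne
    · exact Filter.Eventually.of_forall fun θ x hxb =>
        hasFDerivAt_G hf (hball x (ball_subset_closedBall hxb))
  exact ((key.differentiableAt).const_smul (2 * Real.pi * Complex.I)⁻¹ :)

lemma Fe_eq (hf : DifferentiableOn ℂ f {(0 : Fin n → ℂ)}ᶜ) {z : Fin n → ℂ}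
    (hz0 : ‖z 0‖ < 1) {j : Fin n} (hj : j ≠ 0) (hzj : z j ≠ 0) : Fe f z = f z := by
  have hupd : ∀ w : ℂ, Function.update z 0 w ≠ 0 := by
    intro w h
    apply hzj
    have := congrFun h j
    rwa [Function.update_of_ne hj] at this
  have hmap : Differentiable ℂ fun w : ℂ => Function.update z 0 w := by
    rw [differentiable_pi]
    intro i
    rcases eq_or_ne i 0 with h | h
    · subst h
      simp only [Function.update_self]
      exact differentiable_id
    · simp only [Function.update_of_ne h]
      exact differentiable_const _
  have hdiff : ∀ w : ℂ, DifferentiableAt ℂ (fun w => f (Function.update z 0 w)) w := fun w =>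
    (hf.differentiableAt (isOpen_compl_singleton.mem_nhds (hupd w))).comp w (hmap w)
  have hball : z 0 ∈ ball (0:ℂ) 1 := by
    rwa [mem_ball, dist_zero_right]
  have hcau := Complex.two_pi_I_inv_smul_circleIntegral_sub_inv_smul_of_differentiable_on_off_countable
    (s := (∅ : Set ℂ)) countable_empty hball
    (fun w _ => (hdiff w).continuousAt.continuousWithinAt)
    (fun x _ => hdiff x)
  rw [Function.update_eq_self] at hcau
  rw [← hcau, Fe]
  congr 1
  rw [circleIntegral, intervalIntegral.integral_of_le Real.two_pi_pos.le]
  refine setIntegral_congr_fun measurableSet_Ioc fun θ _ => ?_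
  simp only [G, Ψ, smul_eq_mul]

lemma Fe_eq' (hf : DifferentiableOn ℂ f {(0 : Fin n → ℂ)}ᶜ) (hn : 1 < n) {z : Fin n → ℂ}
    (hz0 : ‖z 0‖ < 1) (hz : z ≠ 0) : Fe f z = f z := by
  by_cases hcase : ∃ j : Fin n, j ≠ 0 ∧ z j ≠ 0
  · obtain ⟨j, hj, hzj⟩ := hcase
    exact Fe_eq hf hz0 hj hzj
  push_neg at hcase
  set i1 : Fin n := ⟨1, hn⟩ with hi1
  have hi10 : i1 ≠ 0 := by
    intro h
    have := congrArg Fin.val h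
    simp [hi1] at this
  have hzi1 : z i1 = 0 := hcase i1 hi10
  set zt : ℂ → (Fin n → ℂ) := fun t => Function.update z i1 t with hzt
  have h0 : ∀ t, zt t 0 = z 0 := fun t => Function.update_of_ne (Ne.symm hi10) t z
  have key : ∀ t : ℂ, t ≠ 0 → Fe f (zt t) = f (zt t) := by
    intro t ht
    refine Fe_eq hf ?_ hi10 ?_
    · rw [h0]; exact hz0
    · rw [hzt]; simpa using ht
  have hzt_tendsto : Tendsto zt (nhdsWithin (0:ℂ) {(0:ℂ)}ᶜ) (nhds z) := by
    have hc : Continuous zt := by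
      rw [hzt]
      exact Continuous.update continuous_const i1 continuous_id
    have h1 : Tendsto zt (nhds 0) (nhds (zt 0)) := hc.tendsto 0
    have h2 : zt 0 = z := by
      rw [hzt, ← hzi1]
      exact Function.update_eq_self i1 z
    rw [h2] at h1
    exact h1.mono_left nhdsWithin_le_nhds
  have h1 : Tendsto (fun t => Fe f (zt t)) (nhdsWithin (0:ℂ) {(0:ℂ)}ᶜ) (nhds (Fe f z)) :=
    ((Fe_diffAt hf hz0).continuousAt.tendsto).comp hzt_tendsto
  have h2 : Tendsto (fun t => f (zt t)) (nhdsWithin (0:ℂ) {(0:ℂ)}ᶜ) (nhds (f z)) :=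
    (((hf.differentiableAt (isOpen_compl_singleton.mem_nhds hz)).continuousAt).tendsto).comp
      hzt_tendsto
  have heq : (fun t => Fe f (zt t)) =ᶠ[nhdsWithin (0:ℂ) {(0:ℂ)}ᶜ] fun t => f (zt t) := by
    filter_upwards [self_mem_nhdsWithin] with t ht
    exact key t ht
  exact tendsto_nhds_unique (h1.congr' heq) h2

end HartogsPuncture

/-- Hartogs' extension theorem for a single puncture: for `n ≥ 2`, every function
holomorphic on `ℂⁿ ∖ {0}` extends to a holomorphic function on all of `ℂⁿ`. -/
theorem hartogs_extension_puncture (n : ℕ) (hn : 2 ≤ n) (f : (Fin n → ℂ) → ℂ)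
    (hf : DifferentiableOn ℂ f {(0 : Fin n → ℂ)}ᶜ) :
    ∃ F : (Fin n → ℂ) → ℂ, Differentiable ℂ F ∧ ∀ z : Fin n → ℂ, z ≠ 0 → F z = f z := by
  haveI : NeZero n := ⟨by omega⟩
  have hn1 : 1 < n := by omega
  refine ⟨fun z => if z = 0 then HartogsPuncture.Fe f 0 else f z, ?_, fun z hz => if_neg hz⟩
  intro z
  rcases eq_or_ne z 0 with rfl | hz
  · have hU : IsOpen {y : Fin n → ℂ | ‖y 0‖ < 1} := by
      have : {y : Fin n → ℂ | ‖y 0‖ < 1} = (fun y : Fin n → ℂ => y 0) ⁻¹' (ball (0:ℂ) 1) := by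
        ext y
        simp [mem_ball, dist_zero_right]
      rw [this]
      exact isOpen_ball.preimage (continuous_apply 0)
    have hmem : {y : Fin n → ℂ | ‖y 0‖ < 1} ∈ nhds (0 : Fin n → ℂ) :=
      hU.mem_nhds (by simp)
    have heq : (fun z : Fin n → ℂ => if z = 0 then HartogsPuncture.Fe f 0 else f z)
        =ᶠ[nhds (0 : Fin n → ℂ)] HartogsPuncture.Fe f := by
      filter_upwards [hmem] with y hy
      rcases eq_or_ne y 0 with rfl | hy0
      · simp
      · rw [if_neg hy0, HartogsPuncture.Fe_eq' hf hn1 hy hy0]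
    exact (HartogsPuncture.Fe_diffAt hf (by simp)).congr_of_eventuallyEq heq
  · have heq : (fun z : Fin n → ℂ => if z = 0 then HartogsPuncture.Fe f 0 else f z)
        =ᶠ[nhds z] f := by
      filter_upwards [isOpen_compl_singleton.mem_nhds hz] with y hy
      exact if_neg hy
    exact ((hf.differentiableAt (isOpen_compl_singleton.mem_nhds hz))).congr_of_eventuallyEq heq
end

section
/- Let n ≥ 2, let U ⊆ ℂⁿ be open and connected, and let S ⊂ U be a finite set. Then every function holomorphic on U ∖ S extends uniquely to a holomorphic function on U. -/
open Set

open Metric Complex Function MeasureTheory Topology Filter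
set_option maxHeartbeats 1000000
set_option synthInstance.maxHeartbeats 400000

lemma slice_fderiv_bound {n : ℕ} {f : (Fin n → ℂ) → ℂ} {V : Set (Fin n → ℂ)}
    (hV : IsOpen V) (hf : DifferentiableOn ℂ f V) {y : Fin n → ℂ} {s M : ℝ} (hs : 0 < s)
    (hball : ball y (2*s) ⊆ V) (hM : ∀ z ∈ closedBall y s, ‖f z‖ ≤ M) :
    ‖fderiv ℂ f y‖ ≤ M / s := by
  have hyV : y ∈ V := hball (mem_ball_self (by linarith))
  have hM0 : 0 ≤ M := le_trans (norm_nonneg _) (hM y (mem_closedBall_self hs.le))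
  refine ContinuousLinearMap.opNorm_le_bound _ (div_nonneg hM0 hs.le) fun u => ?_
  rcases eq_or_ne u 0 with rfl | hu
  · simp
  have hun : 0 < ‖u‖ := norm_pos_iff.2 hu
  set ρ : ℝ := s / ‖u‖ with hρ
  have hρ0 : 0 < ρ := div_pos hs hun
  set φ : ℂ → ℂ := fun t => f (y + t • u) with hφ
  have hmem : ∀ t : ℂ, ‖t‖ < 2*ρ → y + t • u ∈ V := by
    intro t ht
    apply hball
    simp only [mem_ball, dist_eq_norm, add_sub_cancel_left, norm_smul]
    calc ‖t‖ * ‖u‖ < (2*ρ) * ‖u‖ := by gcongr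
      _ = 2*s := by rw [hρ, mul_assoc, div_mul_cancel₀ _ hun.ne']
  have hline : ∀ t : ℂ, DifferentiableAt ℂ (fun t : ℂ => y + t • u) t :=
    fun t => (differentiableAt_id.smul_const u).const_add y
  have hφdiff : DifferentiableOn ℂ φ (ball 0 (2*ρ)) := by
    intro t ht
    simp only [mem_ball, dist_zero_right] at ht
    exact (((hf.differentiableAt (hV.mem_nhds (hmem t ht))).comp t
      (hline t))).differentiableWithinAt
  have hsub : closedBall (0:ℂ) ρ ⊆ ball (0:ℂ) (2*ρ) :=
    closedBall_subset_ball (by linarith)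
  have hcd : Complex.cderiv ρ φ 0 = deriv φ 0 :=
    Complex.cderiv_eq_deriv isOpen_ball hφdiff hρ0 hsub
  have hbd : ‖deriv φ 0‖ ≤ M / ρ := by
    rw [← hcd]
    refine Complex.norm_cderiv_le hρ0 fun t ht => ?_
    apply hM
    simp only [mem_sphere, dist_zero_right] at ht
    simp only [mem_closedBall, dist_eq_norm, add_sub_cancel_left, norm_smul, ht]
    rw [hρ]
    field_simp
    exact le_rfl
  have hder : HasDerivAt φ (fderiv ℂ f y u) 0 := by
    have h1 : HasDerivAt (fun t : ℂ => y + t • u) u 0 := by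
      simpa using ((hasDerivAt_id (0:ℂ)).smul_const u).const_add y
    have h2 : HasFDerivAt f (fderiv ℂ f y) y :=
      (hf.differentiableAt (hV.mem_nhds hyV)).hasFDerivAt
    have h2' : HasFDerivAt f (fderiv ℂ f y) ((fun t : ℂ => y + t • u) 0) := by
      simpa using h2
    exact h2'.comp_hasDerivAt (0:ℂ) h1
  calc ‖(fderiv ℂ f y) u‖ = ‖deriv φ 0‖ := by rw [hder.deriv]
    _ ≤ M / ρ := hbd
    _ = M / s * ‖u‖ := by rw [hρ]; field_simp

lemma local_extension {n : ℕ} (hn : 2 ≤ n) (c : Fin n → ℂ) {r : ℝ} (hr : 0 < r)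
    {f : (Fin n → ℂ) → ℂ} (hf : DifferentiableOn ℂ f (ball c (4*r) \ {c})) :
    ∃ F : (Fin n → ℂ) → ℂ, DifferentiableOn ℂ F (ball c r) ∧ EqOn F f (ball c r \ {c}) := by
  haveI : NeZero n := ⟨by omega⟩
  set V : Set (Fin n → ℂ) := ball c (4*r) \ {c} with hV
  have hVo : IsOpen V := isOpen_ball.sdiff isClosed_singleton
  have hcont : ContinuousOn f V := hf.continuousOn
  set K : Set (Fin n → ℂ) := closedBall c (3*r) ∩ {y | 3*r/2 ≤ dist (y 0) (c 0)} with hK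
  have hKV : K ⊆ V := by
    rintro y ⟨h1, h2⟩
    refine ⟨mem_ball.2 (lt_of_le_of_lt (mem_closedBall.1 h1) (by linarith)), ?_⟩
    simp only [mem_singleton_iff]
    intro h
    rw [h] at h2
    simp only [mem_setOf_eq, dist_self] at h2
    linarith
  have hKc : IsCompact K := (isCompact_closedBall c (3*r)).inter_right
      (isClosed_le continuous_const ((continuous_apply (0 : Fin n)).dist continuous_const))
  obtain ⟨M0, hM0⟩ := hKc.exists_bound_of_continuousOn (hcont.mono hKV)
  set M : ℝ := max M0 0 with hMdef
  have hM : ∀ y ∈ K, ‖f y‖ ≤ M := fun y hy => le_trans (hM0 y hy) (le_max_left _ _)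
  have hMnn : (0:ℝ) ≤ M := le_max_right _ _
  -- coordinates of updated points
  have hcoord : ∀ (x : Fin n → ℂ) (z : ℂ), dist x c < r → dist z (c 0) ≤ 2*r →
      dist (update x 0 z) c ≤ 2*r := by
    intro x z hx hz
    refine (dist_pi_le_iff (by linarith)).2 fun i => ?_
    rcases eq_or_ne i 0 with rfl | hi
    · simpa using hz
    · rw [Function.update_of_ne hi]
      exact le_trans (dist_le_pi_dist x c i) (by linarith)
  have hupdK : ∀ (x : Fin n → ℂ) (z : ℂ), dist x c < r → dist z (c 0) = 2*r →
      closedBall (update x 0 z) (r/4) ⊆ K := by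
    intro x z hx hz y hy
    rw [mem_closedBall] at hy
    constructor
    · rw [mem_closedBall]
      calc dist y c ≤ dist y (update x 0 z) + dist (update x 0 z) c := dist_triangle _ _ _
        _ ≤ r/4 + 2*r := add_le_add hy (hcoord x z hx hz.le)
        _ ≤ 3*r := by linarith
    · show 3*r/2 ≤ dist (y 0) (c 0)
      have h1 : dist (y 0) (update x 0 z 0) ≤ r/4 := le_trans (dist_le_pi_dist _ _ 0) hy
      rw [Function.update_self] at h1
      have h2 : dist z (c 0) ≤ dist z (y 0) + dist (y 0) (c 0) := dist_triangle _ _ _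
      rw [hz, dist_comm z (y 0)] at h2
      linarith
  have hmemK : ∀ (x : Fin n → ℂ) (z : ℂ), dist x c < r → dist z (c 0) = 2*r →
      update x 0 z ∈ K := fun x z hx hz =>
    hupdK x z hx hz (mem_closedBall_self (by linarith))
  have hupdV : ∀ (x : Fin n → ℂ) (z : ℂ), dist x c < r → dist z (c 0) = 2*r →
      ball (update x 0 z) (r/2) ⊆ V := by
    intro x z hx hz y hy
    rw [mem_ball] at hy
    constructor
    · rw [mem_ball]
      calc dist y c ≤ dist y (update x 0 z) + dist (update x 0 z) c := dist_triangle _ _ _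
        _ < r/2 + 2*r := by have := hcoord x z hx hz.le; linarith
        _ ≤ 4*r := by linarith
    · simp only [mem_singleton_iff]
      intro hyc
      subst hyc
      have h1 : dist (y 0) (update x 0 z 0) ≤ dist y (update x 0 z) := dist_le_pi_dist _ _ 0
      rw [Function.update_self] at h1
      rw [dist_comm] at hz
      linarith
  have hfd : ∀ (x : Fin n → ℂ) (z : ℂ), dist x c < r → dist z (c 0) = 2*r →
      ‖fderiv ℂ f (update x 0 z)‖ ≤ M / (r/4) := by
    intro x z hx hz
    refine slice_fderiv_bound hVo hf (by linarith) ?_ fun y hy => hM y (hupdK x z hx hz hy)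
    have h2 : (2:ℝ) * (r/4) = r/2 := by ring
    rw [h2]
    exact hupdV x z hx hz
  -- linear algebra helpers
  set e0 : Fin n → ℂ := Pi.single 0 1 with he0
  have he0n : ‖e0‖ ≤ 1 := by
    refine (pi_norm_le_iff_of_nonneg zero_le_one).2 fun j => ?_
    rcases eq_or_ne j 0 with rfl | h
    · simp [he0]
    · simp [he0, Pi.single_eq_of_ne h]
  set proj0 : (Fin n → ℂ) →L[ℂ] ℂ := ContinuousLinearMap.proj 0 with hproj0
  have hproj0n : ‖proj0‖ ≤ 1 :=
    ContinuousLinearMap.opNorm_le_bound _ zero_le_one fun u => by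
      simpa [hproj0] using norm_le_pi_norm u 0
  set B : (Fin n → ℂ) →L[ℂ] (Fin n → ℂ) :=
    ContinuousLinearMap.id ℂ _ - (ContinuousLinearMap.proj 0).smulRight e0 with hBdef
  have hBapp : ∀ u : Fin n → ℂ, B u = u - (u 0) • e0 := by
    intro u; simp [hBdef]
  have hBn : ‖B‖ ≤ 2 := by
    refine ContinuousLinearMap.opNorm_le_bound _ (by norm_num) fun u => ?_
    rw [hBapp]
    have h1 : ‖u 0‖ ≤ ‖u‖ := norm_le_pi_norm u 0
    calc ‖u - (u 0) • e0‖ ≤ ‖u‖ + ‖(u 0) • e0‖ := norm_sub_le _ _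
      _ ≤ ‖u‖ + ‖u 0‖ * 1 := by rw [norm_smul]; gcongr
      _ ≤ ‖u‖ + ‖u‖ * 1 := by gcongr
      _ = 2 * ‖u‖ := by ring
  have hupdate : ∀ (x : Fin n → ℂ) (z : ℂ), update x 0 z = B x + z • e0 := by
    intro x z
    funext i
    rw [hBapp]
    rcases eq_or_ne i 0 with rfl | hi
    · simp [he0]
    · simp [he0, Function.update_of_ne hi, Pi.single_eq_of_ne hi]
  -- the circle
  set R : ℝ := 2*r with hR
  have hR0 : 0 < R := by rw [hR]; linarith
  set w : ℝ → ℂ := circleMap (c 0) R with hw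
  have hwmem : ∀ θ, dist (w θ) (c 0) = R := by
    intro θ
    have := circleMap_mem_sphere (c 0) hR0.le θ
    rwa [mem_sphere] at this
  have hker : ∀ (x : Fin n → ℂ), dist x c < r → ∀ θ, r ≤ ‖w θ - x 0‖ := by
    intro x hx θ
    have h1 : dist (x 0) (c 0) ≤ dist x c := dist_le_pi_dist x c 0
    have h3 : dist (w θ) (c 0) ≤ dist (w θ) (x 0) + dist (x 0) (c 0) := dist_triangle _ _ _
    rw [hwmem θ, hR] at h3
    rw [← dist_eq_norm]
    linarith
  have hkne : ∀ (x : Fin n → ℂ), dist x c < r → ∀ θ, w θ - x 0 ≠ 0 := by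
    intro x hx θ h
    have := hker x hx θ
    rw [h, norm_zero] at this
    linarith
  -- the extension
  set Φ : (Fin n → ℂ) → ℝ → ℂ := fun x θ =>
    deriv (circleMap (c 0) R) θ • ((w θ - x 0)⁻¹ • f (update x 0 (w θ))) with hΦ
  set F : (Fin n → ℂ) → ℂ := fun x =>
    (2 * Real.pi * Complex.I)⁻¹ • ∮ z in C(c 0, R), (z - x 0)⁻¹ • f (update x 0 z) with hFdef
  have hFint : ∀ x, F x = (2 * Real.pi * Complex.I)⁻¹ • ∫ θ in (0:ℝ)..2 * Real.pi, Φ x θ :=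
    fun x => rfl
  -- continuity in θ
  have hupdC : ∀ x : Fin n → ℂ, Continuous fun θ => update x 0 (w θ) := by
    intro x
    have h : (fun θ => update x 0 (w θ)) = fun θ => B x + (w θ) • e0 :=
      funext fun θ => hupdate x (w θ)
    rw [h]
    exact continuous_const.add ((continuous_circleMap _ _).smul continuous_const)
  have hΦc : ∀ x : Fin n → ℂ, dist x c < r → Continuous (Φ x) := by
    intro x hx
    apply Continuous.fun_smul
    · have h : deriv (circleMap (c 0) R) = fun θ => circleMap 0 R θ * Complex.I :=
        funext fun θ => deriv_circleMap _ _ _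
      rw [h]
      exact (continuous_circleMap 0 R).mul continuous_const
    apply Continuous.fun_smul
    · exact ((continuous_circleMap _ _).sub continuous_const).inv₀ fun θ => hkne x hx θ
    · exact hcont.comp_continuous (hupdC x) fun θ => hKV (hmemK x (w θ) hx (hwmem θ))
  -- differentiability of F
  have hFdiff : ∀ x₀ ∈ ball c r, DifferentiableAt ℂ F x₀ := by
    intro x₀ hx₀
    rw [mem_ball] at hx₀
    set ε : ℝ := (r - dist x₀ c)/2 with hε
    have hε0 : 0 < ε := by rw [hε]; linarith
    have hballx : ∀ x ∈ ball x₀ ε, dist x c < r := by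
      intro x hx
      rw [mem_ball] at hx
      calc dist x c ≤ dist x x₀ + dist x₀ c := dist_triangle _ _ _
        _ < ε + dist x₀ c := by linarith
        _ ≤ r := by rw [hε]; linarith
    set F' : (Fin n → ℂ) → ℝ → (Fin n → ℂ) →L[ℂ] ℂ := fun x θ =>
      deriv (circleMap (c 0) R) θ •
        ((w θ - x 0)⁻¹ • ((fderiv ℂ f (update x 0 (w θ))).comp B) +
          f (update x 0 (w θ)) • ((-(((w θ - x 0)) ^ 2)⁻¹) • -proj0)) with hF'
    have key := intervalIntegral.hasFDerivAt_integral_of_dominated_of_fderiv_le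
      (𝕜 := ℂ) (μ := MeasureTheory.volume) (F := Φ) (F' := F') (x₀ := x₀)
      (a := 0) (b := 2*Real.pi)
      (bound := fun _ => R * (1/r * (M/(r/4) * 2) + M * (1/r^2 * 1)))
      (ball_mem_nhds x₀ hε0) ?meas ?int ?meas' ?bound ?bint ?diff
    case meas =>
      filter_upwards [isOpen_ball.mem_nhds (mem_ball.2 hx₀)] with x hx
      exact (hΦc x (mem_ball.1 hx)).aestronglyMeasurable
    case int => exact (hΦc x₀ hx₀).intervalIntegrable _ _
    case meas' =>
      have m1 : Measurable fun θ => fderiv ℂ f (update x₀ 0 (w θ)) :=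
        (measurable_fderiv ℂ f).comp (hupdC x₀).measurable
      have m2 : Measurable fun θ => (fderiv ℂ f (update x₀ 0 (w θ))).comp B :=
        (((ContinuousLinearMap.compL ℂ (Fin n → ℂ) (Fin n → ℂ) ℂ).flip
          B).continuous.measurable).comp m1
      have c1 : Continuous fun θ => (w θ - x₀ 0)⁻¹ :=
        ((continuous_circleMap _ _).sub continuous_const).inv₀ fun θ => hkne x₀ hx₀ θ
      have m3 : AEStronglyMeasurable (fun θ =>
          (w θ - x₀ 0)⁻¹ • ((fderiv ℂ f (update x₀ 0 (w θ))).comp B))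
          (MeasureTheory.volume.restrict (Set.uIoc (0:ℝ) (2*Real.pi))) :=
        c1.aestronglyMeasurable.smul m2.aestronglyMeasurable
      have c2 : Continuous fun θ =>
          f (update x₀ 0 (w θ)) • ((-(((w θ - x₀ 0)) ^ 2)⁻¹) • -proj0) := by
        apply Continuous.fun_smul
        · exact hcont.comp_continuous (hupdC x₀) fun θ => hKV (hmemK x₀ (w θ) hx₀ (hwmem θ))
        · exact ((((((continuous_circleMap _ _).sub continuous_const).pow 2).inv₀
            (fun θ => pow_ne_zero 2 (hkne x₀ hx₀ θ))).neg).smul continuous_const)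
      have c3 : Continuous fun θ => deriv (circleMap (c 0) R) θ := by
        have h : deriv (circleMap (c 0) R) = fun θ => circleMap 0 R θ * Complex.I :=
          funext fun θ => deriv_circleMap _ _ _
        rw [h]
        exact (continuous_circleMap 0 R).mul continuous_const
      exact c3.aestronglyMeasurable.smul (m3.add c2.aestronglyMeasurable)
    case bint => exact intervalIntegrable_const
    case bound =>
      refine Filter.Eventually.of_forall fun θ _ x hx => ?_
      have hxc : dist x c < r := hballx x hx
      have hk : r ≤ ‖w θ - x 0‖ := hker x hxc θ
      have hinv : ‖(w θ - x 0)⁻¹‖ ≤ 1/r := by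
        rw [norm_inv, one_div]
        exact inv_anti₀ hr hk
      have hinv2 : ‖(-(((w θ - x 0)) ^ 2)⁻¹)‖ ≤ 1/r^2 := by
        rw [norm_neg, norm_inv, norm_pow, one_div]
        refine inv_anti₀ (by positivity) ?_
        gcongr
      have hfb : ‖f (update x 0 (w θ))‖ ≤ M := hM _ (hmemK x (w θ) hxc (hwmem θ))
      have hfdb : ‖(fderiv ℂ f (update x 0 (w θ))).comp B‖ ≤ M/(r/4) * 2 := by
        calc ‖(fderiv ℂ f (update x 0 (w θ))).comp B‖
            ≤ ‖fderiv ℂ f (update x 0 (w θ))‖ * ‖B‖ := ContinuousLinearMap.opNorm_comp_le _ _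
          _ ≤ M/(r/4) * 2 := by
              have := hfd x (w θ) hxc (hwmem θ)
              have h0 : (0:ℝ) ≤ M/(r/4) := by positivity
              exact mul_le_mul this hBn (norm_nonneg _) h0
      have hd : ‖deriv (circleMap (c 0) R) θ‖ = R := by
        simp only [deriv_circleMap]
        rw [norm_mul]
        simp [norm_circleMap_zero, abs_of_pos hR0]
      simp only [hF']
      have hb1 : ‖(w θ - x 0)⁻¹ • ((fderiv ℂ f (update x 0 (w θ))).comp B)‖
          ≤ 1/r * (M/(r/4) * 2) :=
        le_trans (norm_smul_le ((w θ - x 0)⁻¹) ((fderiv ℂ f (update x 0 (w θ))).comp B))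
          (mul_le_mul hinv hfdb (norm_nonneg _) (by positivity))
      have hnp : ‖-proj0‖ = ‖proj0‖ := norm_neg _
      have hb2 : ‖(-(((w θ - x 0)) ^ 2)⁻¹) • -proj0‖ ≤ 1/r^2 * 1 := by
        refine le_trans (norm_smul_le ((-(((w θ - x 0)) ^ 2)⁻¹)) (-proj0)) ?_
        rw [hnp]
        exact mul_le_mul hinv2 hproj0n (norm_nonneg _) (by positivity)
      have hb3 : ‖f (update x 0 (w θ)) • ((-(((w θ - x 0)) ^ 2)⁻¹) • -proj0)‖
          ≤ M * (1/r^2 * 1) :=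
        le_trans (norm_smul_le (f (update x 0 (w θ))) ((-(((w θ - x 0)) ^ 2)⁻¹) • -proj0))
          (mul_le_mul hfb hb2 (norm_nonneg _) hMnn)
      have hstep : ‖(w θ - x 0)⁻¹ • ((fderiv ℂ f (update x 0 (w θ))).comp B) +
          f (update x 0 (w θ)) • ((-(((w θ - x 0)) ^ 2)⁻¹) • -proj0)‖
          ≤ 1/r * (M/(r/4) * 2) + M * (1/r^2 * 1) :=
        le_trans (norm_add_le _ _) (add_le_add hb1 hb3)
      refine le_trans (norm_smul_le (deriv (circleMap (c 0) R) θ)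
        ((w θ - x 0)⁻¹ • ((fderiv ℂ f (update x 0 (w θ))).comp B) +
          f (update x 0 (w θ)) • ((-(((w θ - x 0)) ^ 2)⁻¹) • -proj0))) ?_
      rw [hd]
      exact mul_le_mul_of_nonneg_left hstep hR0.le
    case diff =>
      refine Filter.Eventually.of_forall fun θ _ x hx => ?_
      have hxc : dist x c < r := hballx x hx
      have hyV : update x 0 (w θ) ∈ V := hKV (hmemK x (w θ) hxc (hwmem θ))
      have hAff : HasFDerivAt (fun x : Fin n → ℂ => update x 0 (w θ)) B x := by
        have h : (fun x : Fin n → ℂ => update x 0 (w θ)) = fun x => B x + (w θ) • e0 :=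
          funext fun x => hupdate x (w θ)
        rw [h]
        exact B.hasFDerivAt.add_const _
      have h2 : HasFDerivAt f (fderiv ℂ f (update x 0 (w θ))) (update x 0 (w θ)) :=
        (hf.differentiableAt (hVo.mem_nhds hyV)).hasFDerivAt
      have h3 : HasFDerivAt (fun x : Fin n → ℂ => f (update x 0 (w θ)))
          ((fderiv ℂ f (update x 0 (w θ))).comp B) x := h2.comp x hAff
      have h4 : HasFDerivAt (fun x : Fin n → ℂ => w θ - x 0) (-proj0) x := by
        have : HasFDerivAt (fun x : Fin n → ℂ => x 0) proj0 x := proj0.hasFDerivAt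
        exact this.const_sub (w θ)
      have h5 : HasDerivAt (fun z : ℂ => z⁻¹) (-(((w θ - x 0)) ^ 2)⁻¹) (w θ - x 0) :=
        hasDerivAt_inv (hkne x hxc θ)
      have h6 : HasFDerivAt (fun x : Fin n → ℂ => (w θ - x 0)⁻¹)
          ((-(((w θ - x 0)) ^ 2)⁻¹) • -proj0) x := h5.comp_hasFDerivAt x h4
      have h8 := h6.mul h3
      have hgoal : HasFDerivAt (fun x : Fin n → ℂ => (w θ - x 0)⁻¹ * f (update x 0 (w θ)))
          ((w θ - x 0)⁻¹ • ((fderiv ℂ f (update x 0 (w θ))).comp B) +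
            f (update x 0 (w θ)) • ((-(((w θ - x 0)) ^ 2)⁻¹) • -proj0)) x := h8
      have h9 := hgoal.fun_const_smul (deriv (circleMap (c 0) R) θ)
      simpa only [hΦ, hF', smul_eq_mul] using h9
    · -- conclude differentiability
      have hFeq : F = fun x => (2 * Real.pi * Complex.I)⁻¹ • ∫ θ in (0:ℝ)..2*Real.pi, Φ x θ :=
        funext hFint
      rw [hFeq]
      exact (key.const_smul ((2 * Real.pi * Complex.I : ℂ)⁻¹)).differentiableAt
  -- Cauchy integral formula on good points
  have hgood : ∀ x : Fin n → ℂ, dist x c < r → ∀ j : Fin n, j ≠ 0 → x j ≠ c j → F x = f x := by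
    intro x hx j hj hxj
    have hupdV' : ∀ z : ℂ, dist z (c 0) ≤ R → update x 0 z ∈ V := by
      intro z hz
      refine ⟨mem_ball.2 (lt_of_le_of_lt (hcoord x z hx hz) (by rw [hR]; linarith)), ?_⟩
      simp only [mem_singleton_iff]
      intro h
      apply hxj
      have h' := congrFun h j
      rwa [Function.update_of_ne hj] at h'
    have hgd : DifferentiableOn ℂ (fun z => f (update x 0 z)) (closedBall (c 0) R) := by
      intro z hz
      have hzV := hupdV' z (mem_closedBall.1 hz)
      have haff : DifferentiableAt ℂ (fun z : ℂ => update x 0 z) z := by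
        have h : (fun z : ℂ => update x 0 z) = fun z => B x + z • e0 :=
          funext fun z => hupdate x z
        rw [h]
        exact (differentiableAt_id.smul_const e0).const_add (B x)
      exact ((hf.differentiableAt (hVo.mem_nhds hzV)).comp z haff).differentiableWithinAt
    have hdc : DiffContOnCl ℂ (fun z => f (update x 0 z)) (ball (c 0) R) := by
      apply DifferentiableOn.diffContOnCl
      rwa [closure_ball (c 0) (ne_of_gt hR0)]
    have hx0 : x 0 ∈ ball (c 0) R := by
      rw [mem_ball]
      exact lt_of_le_of_lt (dist_le_pi_dist x c 0) (by rw [hR]; linarith)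
    have hcauchy := hdc.circleIntegral_sub_inv_smul hx0
    simp only [hFdef]
    rw [hcauchy, Function.update_eq_self, inv_smul_smul₀ Complex.two_pi_I_ne_zero]
  -- conclusion
  refine ⟨F, fun x hx => (hFdiff x hx).differentiableWithinAt, ?_⟩
  rintro x ⟨hxb, hxc⟩
  rw [mem_ball] at hxb
  simp only [mem_singleton_iff] at hxc
  by_cases hj : ∃ j : Fin n, j ≠ 0 ∧ x j ≠ c j
  · obtain ⟨j, hj0, hjx⟩ := hj
    exact hgood x hxb j hj0 hjx
  push_neg at hj
  set j1 : Fin n := ⟨1, by omega⟩ with hj1def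
  have hj10 : j1 ≠ 0 := by simp [hj1def, Fin.ext_iff]
  set q : ℂ → (Fin n → ℂ) := fun t => x + t • (Pi.single j1 1 : Fin n → ℂ) with hq
  have hsing : ‖(Pi.single j1 1 : Fin n → ℂ)‖ ≤ 1 := by
    refine (pi_norm_le_iff_of_nonneg zero_le_one).2 fun i => ?_
    rcases eq_or_ne i j1 with rfl | h
    · simp
    · simp [Pi.single_eq_of_ne h]
  have hqdist : ∀ t : ℂ, dist (q t) x ≤ ‖t‖ := by
    intro t
    rw [hq]
    simp only [dist_eq_norm, add_sub_cancel_left]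
    calc ‖t • (Pi.single j1 1 : Fin n → ℂ)‖
        = ‖t‖ * ‖(Pi.single j1 1 : Fin n → ℂ)‖ := norm_smul _ _
      _ ≤ ‖t‖ * 1 := by gcongr
      _ = ‖t‖ := mul_one _
  have hδ : 0 < r - dist x c := by linarith
  have hqgood : ∀ t : ℂ, t ≠ 0 → ‖t‖ < r - dist x c → F (q t) = f (q t) := by
    intro t ht htl
    have h1 : dist (q t) c < r := by
      have h2 := hqdist t
      calc dist (q t) c ≤ dist (q t) x + dist x c := dist_triangle _ _ _
        _ < r := by linarith
    refine hgood (q t) h1 j1 hj10 ?_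
    have hqt : q t j1 = x j1 + t := by
      rw [hq]
      simp [Pi.single_eq_same]
    rw [hqt, hj j1 hj10]
    intro h
    exact ht (by simpa using h)
  have hqc : Continuous q := by
    rw [hq]
    exact continuous_const.add (continuous_id.smul continuous_const)
  have hq0 : q 0 = x := by rw [hq]; simp
  have hqcont : Filter.Tendsto q (𝓝[≠] (0:ℂ)) (𝓝 x) := by
    have h := hqc.tendsto 0
    rw [hq0] at h
    exact h.mono_left nhdsWithin_le_nhds
  have hFc : ContinuousAt F x := (hFdiff x (mem_ball.2 hxb)).continuousAt
  have hxV : x ∈ V := ⟨mem_ball.2 (by linarith), by simp only [mem_singleton_iff]; exact hxc⟩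
  have hfc : ContinuousAt f x := (hf.differentiableAt (hVo.mem_nhds hxV)).continuousAt
  have h1 : Filter.Tendsto (fun t => F (q t)) (𝓝[≠] (0:ℂ)) (𝓝 (F x)) := hFc.tendsto.comp hqcont
  have h2 : Filter.Tendsto (fun t => f (q t)) (𝓝[≠] (0:ℂ)) (𝓝 (f x)) := hfc.tendsto.comp hqcont
  have hev : (fun t => F (q t)) =ᶠ[𝓝[≠] (0:ℂ)] fun t => f (q t) := by
    have hsmall : ∀ᶠ t : ℂ in 𝓝 0, ‖t‖ < r - dist x c := by
      filter_upwards [Metric.ball_mem_nhds (0:ℂ) hδ] with t ht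
      simpa [mem_ball, dist_zero_right] using ht
    filter_upwards [hsmall.filter_mono nhdsWithin_le_nhds, self_mem_nhdsWithin] with t ha hb
    exact hqgood t hb ha
  exact tendsto_nhds_unique (h1.congr' hev) h2

/-- Hartogs-type extension across a finite set: for `n ≥ 2`, `U ⊆ ℂⁿ` open and
connected and `S ⊂ U` finite, every function holomorphic on `U ∖ S` extends uniquely
to a holomorphic function on `U`. -/
theorem hartogs_extension_finite (n : ℕ) (hn : 2 ≤ n) (U S : Set (Fin n → ℂ))
    (hU : IsOpen U) (hUc : IsConnected U) (hS : S.Finite) (hSU : S ⊆ U)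
    (f : (Fin n → ℂ) → ℂ) (hf : DifferentiableOn ℂ f (U \ S)) :
    ∃ F : (Fin n → ℂ) → ℂ,
      DifferentiableOn ℂ F U ∧ EqOn F f (U \ S) ∧
      ∀ F' : (Fin n → ℂ) → ℂ, DifferentiableOn ℂ F' U → EqOn F' f (U \ S) →
        EqOn F' F U := by
  classical
  haveI : NeZero n := ⟨by omega⟩
  have hUSo : IsOpen (U \ S) := hU.sdiff hS.isClosed
  have hsing : ‖(Pi.single (0 : Fin n) 1 : Fin n → ℂ)‖ ≤ 1 := by
    refine (pi_norm_le_iff_of_nonneg zero_le_one).2 fun i => ?_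
    rcases eq_or_ne i 0 with rfl | h
    · simp
    · simp [Pi.single_eq_of_ne h]
  have hloc : ∀ c ∈ S, ∃ r : ℝ, 0 < r ∧ ball c (4*r) ⊆ U ∧
      ∀ z ∈ ball c (4*r) ∩ S, z = c := by
    intro c hc
    obtain ⟨ε₁, hε₁, hball₁⟩ := Metric.isOpen_iff.1 hU c (hSU hc)
    have hSc : IsClosed (S \ {c}) := (hS.subset diff_subset).isClosed
    have hcnot : c ∈ (S \ {c})ᶜ := fun h => h.2 rfl
    obtain ⟨ε₂, hε₂, hball₂⟩ := Metric.isOpen_iff.1 hSc.isOpen_compl c hcnot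
    refine ⟨min ε₁ ε₂ / 4, by positivity, ?_, ?_⟩
    · intro y hy
      apply hball₁
      rw [mem_ball] at hy ⊢
      calc dist y c < 4 * (min ε₁ ε₂ / 4) := hy
        _ ≤ ε₁ := by
            have := min_le_left ε₁ ε₂
            linarith
    · rintro y ⟨hy1, hy2⟩
      by_contra h
      refine hball₂ ?_ ⟨hy2, h⟩
      rw [mem_ball] at hy1 ⊢
      calc dist y c < 4 * (min ε₁ ε₂ / 4) := hy1
        _ ≤ ε₂ := by
            have := min_le_right ε₁ ε₂
            linarith
  choose! rad hrad hradU hradS using hloc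
  have hext : ∀ c ∈ S, ∃ Fc : (Fin n → ℂ) → ℂ,
      DifferentiableOn ℂ Fc (ball c (rad c)) ∧ EqOn Fc f (ball c (rad c) \ {c}) := by
    intro c hc
    apply local_extension hn c (hrad c hc)
    refine hf.mono ?_
    rintro y ⟨hy1, hy2⟩
    simp only [mem_singleton_iff] at hy2
    refine ⟨hradU c hc hy1, ?_⟩
    intro hyS
    exact hy2 (hradS c hc y ⟨hy1, hyS⟩)
  choose! Fc hFcd hFce using hext
  set F : (Fin n → ℂ) → ℂ := fun y => if h : y ∈ S then Fc y y else f y with hFdef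
  have hFoff : ∀ y, y ∉ S → F y = f y := fun y hy => dif_neg hy
  have hFeqn : ∀ c ∈ S, Set.EqOn F (Fc c) (ball c (rad c)) := by
    intro c hc y hy
    rcases eq_or_ne y c with rfl | hyc
    · simp only [hFdef]
      exact dif_pos hc
    · have hyS : y ∉ S := by
        intro h
        refine hyc (hradS c hc y ⟨?_, h⟩)
        have hrc := hrad c hc
        exact ball_subset_ball (by linarith) hy
      rw [hFoff y hyS]
      exact (hFce c hc ⟨hy, hyc⟩).symm
  have hFdiff : DifferentiableOn ℂ F U := by
    intro y hy
    by_cases hyS : y ∈ S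
    · have hev : F =ᶠ[𝓝 y] Fc y :=
        Filter.eventuallyEq_of_mem
          (isOpen_ball.mem_nhds (mem_ball_self (hrad y hyS))) (hFeqn y hyS)
      have hd : DifferentiableAt ℂ (Fc y) y :=
        (hFcd y hyS).differentiableAt (isOpen_ball.mem_nhds (mem_ball_self (hrad y hyS)))
      exact ((hev.differentiableAt_iff).2 hd).differentiableWithinAt
    · have hev : F =ᶠ[𝓝 y] f :=
        Filter.eventuallyEq_of_mem (hUSo.mem_nhds ⟨hy, hyS⟩) fun u hu => hFoff u hu.2
      have hd : DifferentiableAt ℂ f y := hf.differentiableAt (hUSo.mem_nhds ⟨hy, hyS⟩)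
      exact ((hev.differentiableAt_iff).2 hd).differentiableWithinAt
  have hFeq : EqOn F f (U \ S) := fun y hy => hFoff y hy.2
  refine ⟨F, hFdiff, hFeq, ?_⟩
  intro F' hF'd hF'e z hz
  by_cases hzS : z ∈ S
  · have hrc := hrad z hzS
    set q : ℂ → (Fin n → ℂ) := fun t => z + t • (Pi.single (0 : Fin n) 1 : Fin n → ℂ) with hq
    have hqdist : ∀ t : ℂ, dist (q t) z ≤ ‖t‖ := by
      intro t
      rw [hq]
      simp only [dist_eq_norm, add_sub_cancel_left]
      calc ‖t • (Pi.single (0 : Fin n) 1 : Fin n → ℂ)‖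
          = ‖t‖ * ‖(Pi.single (0 : Fin n) 1 : Fin n → ℂ)‖ := norm_smul _ _
        _ ≤ ‖t‖ * 1 := by gcongr
        _ = ‖t‖ := mul_one _
    have hqU : ∀ t : ℂ, ‖t‖ < 4 * rad z → q t ∈ U := fun t ht =>
      hradU z hzS (mem_ball.2 (lt_of_le_of_lt (hqdist t) ht))
    have hqne : ∀ t : ℂ, t ≠ 0 → q t ≠ z := by
      intro t ht h
      have h0 := congrFun h 0
      rw [hq] at h0
      simp only [Pi.add_apply, Pi.smul_apply, Pi.single_eq_same, smul_eq_mul, mul_one] at h0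
      exact ht (by simpa using h0)
    have hqnotS : ∀ t : ℂ, t ≠ 0 → ‖t‖ < 4 * rad z → q t ∉ S := by
      intro t ht htl h
      exact hqne t ht (hradS z hzS (q t) ⟨mem_ball.2 (lt_of_le_of_lt (hqdist t) htl), h⟩)
    have hagree : ∀ t : ℂ, t ≠ 0 → ‖t‖ < 4 * rad z → F' (q t) = F (q t) := by
      intro t ht htl
      have hm : q t ∈ U \ S := ⟨hqU t htl, hqnotS t ht htl⟩
      rw [hF'e hm, hFeq hm]
    have hqc : Continuous q := by
      rw [hq]
      exact continuous_const.add (continuous_id.smul continuous_const)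
    have hq0 : q 0 = z := by rw [hq]; simp
    have hsmall : ∀ᶠ t : ℂ in 𝓝 0, ‖t‖ < 4 * rad z := by
      filter_upwards [Metric.ball_mem_nhds (0:ℂ) (by linarith : (0:ℝ) < 4 * rad z)] with t ht
      simpa [mem_ball, dist_zero_right] using ht
    have hqtU : Filter.Tendsto q (𝓝[≠] (0:ℂ)) (𝓝[U] z) := by
      refine tendsto_nhdsWithin_of_tendsto_nhds_of_eventually_within q ?_ ?_
      · have h := hqc.tendsto 0
        rw [hq0] at h
        exact h.mono_left nhdsWithin_le_nhds
      · exact (hsmall.filter_mono nhdsWithin_le_nhds).mono fun t ht => hqU t ht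
    have h1 : Filter.Tendsto (fun t => F' (q t)) (𝓝[≠] (0:ℂ)) (𝓝 (F' z)) :=
      ((hF'd.continuousOn z (hSU hzS)).tendsto).comp hqtU
    have h2 : Filter.Tendsto (fun t => F (q t)) (𝓝[≠] (0:ℂ)) (𝓝 (F z)) :=
      ((hFdiff.continuousOn z (hSU hzS)).tendsto).comp hqtU
    have hev : (fun t => F' (q t)) =ᶠ[𝓝[≠] (0:ℂ)] fun t => F (q t) := by
      filter_upwards [hsmall.filter_mono nhdsWithin_le_nhds, self_mem_nhdsWithin] with t ha hb
      exact hagree t hb ha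
    exact tendsto_nhds_unique (h1.congr' hev) h2
  · have hm : z ∈ U \ S := ⟨hz, hzS⟩
    rw [hF'e hm, hFeq hm]
end
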